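/- Let f, g : [a,b] → ℝ be continuous on [a,b] and differentiable on (a,b) with g'(t) ≠ 0 on (a,b), and |f'(t)/g'(t)| ≤ K on (a,b). Then |f((a+b)/2) - (1/(b-a))∫_a^b f(t) dt| ≤ (1/(b-a))|∫_{(a+b)/2}^b g(t) dt - ∫_a^{(a+b)/2} g(t) dt| · K. -/

import Mathlib

open Set intervalIntegral

/-- For a strictly monotone continuous g, the integral of |g m - g t| over [a,b]
(m the midpoint) equals ∫_m^b g - ∫_a^m g. -/
lemma midpoint_abs_integral (a b : ℝ) (hab : a < b) (g : ℝ → ℝ)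
    (hgc : ContinuousOn g (Set.Icc a b)) (hmono : StrictMonoOn g (Set.Icc a b)) :
    (∫ t in a..b, |g ((a + b) / 2) - g t|) =
      (∫ t in ((a + b) / 2)..b, g t) - ∫ t in a..(a + b) / 2, g t := by
  set m := (a + b) / 2 with hm
  have ham : a ≤ m := by simp [hm]; linarith
  have hmb : m ≤ b := by simp [hm]; linarith
  have hmem : m ∈ Set.Icc a b := ⟨ham, hmb⟩
  have hint : IntervalIntegrable (fun t => |g m - g t|) MeasureTheory.volume a b := by
    apply ContinuousOn.intervalIntegrable
    rw [Set.uIcc_of_le hab.le]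
    exact ((continuousOn_const.sub hgc).abs)
  have hint1 : IntervalIntegrable (fun t => |g m - g t|) MeasureTheory.volume a m :=
    hint.mono_set (by rw [Set.uIcc_of_le ham, Set.uIcc_of_le hab.le]; exact Set.Icc_subset_Icc_right hmb)
  have hint2 : IntervalIntegrable (fun t => |g m - g t|) MeasureTheory.volume m b :=
    hint.mono_set (by rw [Set.uIcc_of_le hmb, Set.uIcc_of_le hab.le]; exact Set.Icc_subset_Icc_left ham)
  have hgint1 : IntervalIntegrable g MeasureTheory.volume a m := by
    apply ContinuousOn.intervalIntegrable
    rw [Set.uIcc_of_le ham]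
    exact hgc.mono (Set.Icc_subset_Icc_right hmb)
  have hgint2 : IntervalIntegrable g MeasureTheory.volume m b := by
    apply ContinuousOn.intervalIntegrable
    rw [Set.uIcc_of_le hmb]
    exact hgc.mono (Set.Icc_subset_Icc_left ham)
  have hsplit : (∫ t in a..b, |g m - g t|) =
      (∫ t in a..m, |g m - g t|) + ∫ t in m..b, |g m - g t| :=
    (intervalIntegral.integral_add_adjacent_intervals hint1 hint2).symm
  have h1 : (∫ t in a..m, |g m - g t|) = (∫ t in a..m, (g m - g t)) := by
    apply intervalIntegral.integral_congr
    intro t ht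
    rw [Set.uIcc_of_le ham] at ht
    have : g t ≤ g m := by
      rcases eq_or_lt_of_le ht.2 with h | h
      · rw [h]
      · exact (hmono (⟨ht.1, ht.2.trans hmb⟩) hmem h).le
    simp [abs_of_nonneg, sub_nonneg.mpr this]
  have h2 : (∫ t in m..b, |g m - g t|) = (∫ t in m..b, (g t - g m)) := by
    apply intervalIntegral.integral_congr
    intro t ht
    rw [Set.uIcc_of_le hmb] at ht
    have : g m ≤ g t := by
      rcases eq_or_lt_of_le ht.1 with h | h
      · rw [h]
      · exact (hmono hmem ⟨ham.trans ht.1, ht.2⟩ h).le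
    show |g m - g t| = g t - g m
    rw [abs_of_nonpos (by linarith)]; ring
  rw [hsplit, h1, h2,
    intervalIntegral.integral_sub (by simpa using intervalIntegrable_const) hgint1,
    intervalIntegral.integral_sub hgint2 (by simpa using intervalIntegrable_const)]
  simp only [intervalIntegral.integral_const, smul_eq_mul]
  have : m - a = b - m := by rw [hm]; ring
  rw [this]; ring

theorem ostrowski_cauchy_midpoint (a b : ℝ) (hab : a < b) (f g f' g' : ℝ → ℝ) (K : ℝ)
    (hfc : ContinuousOn f (Set.Icc a b)) (hgc : ContinuousOn g (Set.Icc a b))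
    (hf' : ∀ t ∈ Set.Ioo a b, HasDerivAt f (f' t) t)
    (hg' : ∀ t ∈ Set.Ioo a b, HasDerivAt g (g' t) t)
    (hg0 : ∀ t ∈ Set.Ioo a b, g' t ≠ 0)
    (hK : ∀ t ∈ Set.Ioo a b, |f' t / g' t| ≤ K) :
    |f ((a + b) / 2) - (1 / (b - a)) * ∫ t in a..b, f t| ≤
      (1 / (b - a)) *
        |(∫ t in ((a + b) / 2)..b, g t) - ∫ t in a..(a + b) / 2, g t| * K := by
  set m := (a + b) / 2 with hm
  have ham : a ≤ m := by simp [hm]; linarith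
  have hmb : m ≤ b := by simp [hm]; linarith
  have hmem : m ∈ Set.Icc a b := ⟨ham, hmb⟩
  have hK0 : 0 ≤ K := le_trans (abs_nonneg _) (hK m ⟨by simp [hm]; linarith, by simp [hm]; linarith⟩)
  -- Cauchy MVT bound: |f m - f t| ≤ K * |g m - g t| for t ∈ [a,b]
  have key : ∀ t ∈ Set.Icc a b, |f m - f t| ≤ K * |g m - g t| := by
    intro t ht
    -- general: for x < y in [a,b]
    have gen : ∀ x y : ℝ, a ≤ x → x < y → y ≤ b → |f y - f x| ≤ K * |g y - g x| := by
      intro x y hax hxy hyb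
      have hIoo : Set.Ioo x y ⊆ Set.Ioo a b :=
        Set.Ioo_subset_Ioo hax hyb
      have hIcc : Set.Icc x y ⊆ Set.Icc a b := Set.Icc_subset_Icc hax hyb
      obtain ⟨c, hc, heq⟩ := exists_ratio_hasDerivAt_eq_ratio_slope f f' hxy
        (hfc.mono hIcc) (fun z hz => hf' z (hIoo hz)) g g'
        (hgc.mono hIcc) (fun z hz => hg' z (hIoo hz))
      have hc' : c ∈ Set.Ioo a b := hIoo hc
      have hg'c := hg0 c hc'
      have : f y - f x = (g y - g x) * (f' c / g' c) := by
        field_simp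
        linarith [heq]
      rw [this, abs_mul]
      calc |g y - g x| * |f' c / g' c| ≤ |g y - g x| * K :=
            mul_le_mul_of_nonneg_left (hK c hc') (abs_nonneg _)
        _ = K * |g y - g x| := mul_comm _ _
    rcases lt_trichotomy t m with h | h | h
    · have := gen t m ht.1 h hmb
      rwa [show |g m - g t| = |g m - g t| from rfl]
    · simp [h, hK0]
    · have := gen m t ham h ht.2
      rw [abs_sub_comm (f m), abs_sub_comm (g m)]
      exact this
  -- integrability facts
  have hfint : IntervalIntegrable f MeasureTheory.volume a b := by
    apply ContinuousOn.intervalIntegrable; rwa [Set.uIcc_of_le hab.le]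
  have habsint : IntervalIntegrable (fun t => |g m - g t|) MeasureTheory.volume a b := by
    apply ContinuousOn.intervalIntegrable
    rw [Set.uIcc_of_le hab.le]
    exact (continuousOn_const.sub hgc).abs
  have hfmint : IntervalIntegrable (fun t => f m - f t) MeasureTheory.volume a b := by
    apply ContinuousOn.intervalIntegrable
    rw [Set.uIcc_of_le hab.le]
    exact continuousOn_const.sub hfc
  -- rewrite LHS
  have hba : (0:ℝ) < b - a := by linarith
  have lhs_eq : f m - (1 / (b - a)) * ∫ t in a..b, f t
      = (1 / (b - a)) * ∫ t in a..b, (f m - f t) := by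
    rw [intervalIntegral.integral_sub (by simpa using intervalIntegrable_const) hfint]
    simp only [intervalIntegral.integral_const, smul_eq_mul]
    field_simp
  rw [lhs_eq, abs_mul, abs_of_pos (by positivity : (0:ℝ) < 1 / (b - a))]
  -- bound |∫ (f m - f t)| ≤ K * ∫ |g m - g t|
  have step1 : |∫ t in a..b, (f m - f t)| ≤ ∫ t in a..b, K * |g m - g t| := by
    refine (intervalIntegral.abs_integral_le_integral_abs hab.le).trans ?_
    apply intervalIntegral.integral_mono_on hab.le hfmint.abs (habsint.const_mul K)
    intro t ht
    exact key t ht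
  rw [intervalIntegral.integral_const_mul] at step1
  -- ∫ |g m - g t| ≤ |∫_m^b g - ∫_a^m g|
  have hginj : Set.InjOn g (Set.Icc a b) := by
    intro x hx y hy hxy
    by_contra hne
    wlog hlt : x < y generalizing x y
    · exact this hy hx hxy.symm (Ne.symm hne) (lt_of_le_of_ne (not_lt.mp hlt) (Ne.symm hne))
    have hIoo : Set.Ioo x y ⊆ Set.Ioo a b := Set.Ioo_subset_Ioo hx.1 hy.2
    have hIcc : Set.Icc x y ⊆ Set.Icc a b := Set.Icc_subset_Icc hx.1 hy.2
    obtain ⟨c, hc, heq⟩ := exists_hasDerivAt_eq_slope g g' hlt (hgc.mono hIcc)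
      (fun z hz => hg' z (hIoo hz))
    apply hg0 c (hIoo hc)
    rw [heq, hxy]
    simp
  have step2 : (∫ t in a..b, |g m - g t|) ≤
      |(∫ t in m..b, g t) - ∫ t in a..m, g t| := by
    rcases hgc.strictMonoOn_of_injOn_Icc' hab.le hginj with hmono | hanti
    · rw [midpoint_abs_integral a b hab g hgc hmono]
      exact le_abs_self _
    · have hmono' : StrictMonoOn (fun x => -g x) (Set.Icc a b) := by
        intro x hx y hy hxy
        simpa using hanti hx hy hxy
      have := midpoint_abs_integral a b hab (fun x => -g x) (hgc.neg) hmono'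
      simp only [neg_sub_neg] at this
      rw [intervalIntegral.integral_neg, intervalIntegral.integral_neg] at this
      have habs : ∀ t, |g t - g m| = |g m - g t| := fun t => abs_sub_comm _ _
      simp only [← hm, habs] at this
      rw [this]
      rw [show -(∫ t in m..b, g t) - -∫ t in a..m, g t
          = -((∫ t in m..b, g t) - ∫ t in a..m, g t) by ring]
      exact neg_le_abs _
  calc (1 / (b - a)) * |∫ t in a..b, (f m - f t)|
      ≤ (1 / (b - a)) * (K * ∫ t in a..b, |g m - g t|) :=
        mul_le_mul_of_nonneg_left step1 (by positivity)
    _ ≤ (1 / (b - a)) * (K * |(∫ t in m..b, g t) - ∫ t in a..m, g t|) := by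
        apply mul_le_mul_of_nonneg_left _ (by positivity)
        exact mul_le_mul_of_nonneg_left step2 hK0
    _ = (1 / (b - a)) * |(∫ t in m..b, g t) - ∫ t in a..m, g t| * K := by ring
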